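/- Let G be a finite group and z ∈ G a central element with z² = e. The map λ : D(G) → D(G) determined by g ↦ g and δ_g ↦ δ_g⁰ + δ_{gz}¹, where δ_g^σ = e^σ·δ_g with e⁰ = (1+z)/2 and e¹ = (1−z)/2, is an algebra isomorphism. -/

import Mathlib

/-!
STATEMENT 6: Let `G` be a finite group and `z ∈ G` central with `z² = e`.
The map `λ : D(G) → D(G)` determined by `g ↦ g` and
`δ_g ↦ δ_g⁰ + δ_{gz}¹`, where `δ_g^σ = e^σ·δ_g`, `e⁰ = (1+z)/2`,
`e¹ = (1−z)/2`, is an algebra isomorphism.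

`D(G)` is modeled on the basis `{g ⊗ δ_h}` indexed by `G × G`.  On this basis,
`λ(g·δ_h) = ½((g,h) + (gz,h) + (g,hz) − (gz,hz))`.
-/

open Finsupp

/-- Multiplication of the Drinfeld double `D(G)`. -/
noncomputable def dmul (k G : Type) [Field k] [Group G] [DecidableEq G]
    (a b : (G × G) →₀ k) : (G × G) →₀ k :=
  a.sum fun p c => b.sum fun q d =>
    if q.1⁻¹ * p.2 * q.1 = q.2 then Finsupp.single (p.1 * q.1, q.2) (c * d) else 0

/-- The group-like generator `g = g ⊗ Σ_h δ_h` of `D(G)`. -/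
noncomputable def grpElem (k G : Type) [Field k] [Group G] [Fintype G] [DecidableEq G]
    (g : G) : (G × G) →₀ k :=
  ∑ h : G, Finsupp.single (g, h) (1 : k)

/-- The generator `δ_h = e ⊗ δ_h` of `D(G)`. -/
noncomputable def delElem (k G : Type) [Field k] [Group G] [DecidableEq G]
    (h : G) : (G × G) →₀ k :=
  Finsupp.single ((1 : G), h) (1 : k)

/-- The map `λ`, given on the basis by
`λ(g·δ_h) = ½((g,h) + (gz,h) + (g,hz) − (gz,hz))`, the linear extension of
`λ(g) = g`, `λ(δ_h) = δ_h⁰ + δ_{hz}¹`. -/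
noncomputable def lamMap (k G : Type) [Field k] [Group G] [DecidableEq G]
    (z : G) (a : (G × G) →₀ k) : (G × G) →₀ k :=
  a.sum fun p c => ((2 : k)⁻¹ * c) •
    (Finsupp.single (p.1, p.2) (1 : k) + Finsupp.single (p.1 * z, p.2) (1 : k)
      + Finsupp.single (p.1, p.2 * z) (1 : k) - Finsupp.single (p.1 * z, p.2 * z) (1 : k))

/-- `λ : D(G) → D(G)` is an algebra isomorphism: it is `k`-linear,
multiplicative and bijective, it fixes the group-like generators `g`, and
sends `δ_h` to `δ_h⁰ + δ_{hz}¹ = ½(δ_h + z·δ_h) + ½(δ_{hz} − z·δ_{hz})`. -/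
lemma smA {k G : Type} [Field k] [DecidableEq G] (a : G) (r s : k) :
    Finsupp.single a (r * s) = (r * s) • Finsupp.single a (1 : k) := by simp

variable (k G : Type) [Field k] [Group G] [DecidableEq G] (z : G)

lemma lam_zero : lamMap k G z 0 = 0 := Finsupp.sum_zero_index

lemma lam_single (p : G × G) (c : k) : lamMap k G z (Finsupp.single p c)
    = ((2 : k)⁻¹ * c) •
    (Finsupp.single (p.1, p.2) (1 : k) + Finsupp.single (p.1 * z, p.2) (1 : k)
      + Finsupp.single (p.1, p.2 * z) (1 : k) - Finsupp.single (p.1 * z, p.2 * z) (1 : k)) :=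
  Finsupp.sum_single_index (by simp)

lemma lam_add (a b : (G × G) →₀ k) :
    lamMap k G z (a + b) = lamMap k G z a + lamMap k G z b :=
  Finsupp.sum_add_index' (by simp) (by intro p c1 c2; rw [mul_add, add_smul])

lemma lam_smul (r : k) (a : (G × G) →₀ k) :
    lamMap k G z (r • a) = r • lamMap k G z a := by
  unfold lamMap
  rw [Finsupp.sum_smul_index (by simp), Finsupp.smul_sum]
  exact Finsupp.sum_congr fun p _ => by rw [smul_smul, mul_left_comm]

lemma dmul_zero_left (b : (G × G) →₀ k) : dmul k G 0 b = 0 := Finsupp.sum_zero_index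

lemma dmul_zero_right (a : (G × G) →₀ k) : dmul k G a 0 = 0 := by
  unfold dmul
  simp [Finsupp.sum_zero_index]

lemma dmul_add_left (a a' b : (G × G) →₀ k) :
    dmul k G (a + a') b = dmul k G a b + dmul k G a' b :=
  Finsupp.sum_add_index' (by simp) (by
    intro p c1 c2
    rw [← Finsupp.sum_add]
    exact Finsupp.sum_congr fun q _ => by split_ifs <;> simp [add_mul, Finsupp.single_add])

lemma dmul_add_right (a b b' : (G × G) →₀ k) :
    dmul k G a (b + b') = dmul k G a b + dmul k G a b' := by
  unfold dmul
  rw [← Finsupp.sum_add]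
  exact Finsupp.sum_congr fun p _ =>
    Finsupp.sum_add_index' (by simp) (by
      intro q d1 d2; split_ifs <;> simp [mul_add, Finsupp.single_add])

lemma dmul_single_single (p q : G × G) (c d : k) :
    dmul k G (Finsupp.single p c) (Finsupp.single q d)
      = if q.1⁻¹ * p.2 * q.1 = q.2 then Finsupp.single (p.1 * q.1, q.2) (c * d) else 0 := by
  unfold dmul
  rw [Finsupp.sum_single_index (by simp), Finsupp.sum_single_index (by split_ifs <;> simp)]
section
variable {G : Type} [Group G] (z : G) (hzc : ∀ a : G, z * a = a * z) (hz2 : z * z = 1)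

include hzc in
lemma key2 (a b : G) : a * z * b = a * b * z := by
  rw [mul_assoc, hzc, ← mul_assoc]

include hzc hz2 in
lemma key3 (a b : G) : a * z * (b * z) = a * b := by
  rw [key2 z hzc, mul_assoc, mul_assoc, hz2, mul_one]

include hz2 in
lemma key4 (a : G) : a * z * z = a := by rw [mul_assoc, hz2, mul_one]

include hzc hz2 in
lemma hconj (u x : G) : (u * z)⁻¹ * x * (u * z) = u⁻¹ * x * u := by
  have hzinv : z⁻¹ = z := by rw [inv_eq_iff_mul_eq_one, hz2]
  rw [mul_inv_rev, hzinv, hzc, key2 z hzc, key3 z hzc hz2]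

include hzc in
lemma hmulz (u x : G) : u⁻¹ * (x * z) * u = u⁻¹ * x * u * z := by
  rw [← mul_assoc, key2 z hzc]

include hz2 in
lemma hswap (t s : G) : (t * z = s) ↔ (t = s * z) := by
  constructor
  · intro h; rw [← h, mul_assoc, hz2, mul_one]
  · intro h; rw [h, mul_assoc, hz2, mul_one]

end

section
variable {k G : Type} [Field k] [CharZero k] [Group G] [DecidableEq G]
variable (z : G) (hzc : ∀ a : G, z * a = a * z) (hz2 : z * z = 1)

include hzc hz2 in
lemma lam_mul_single (p q : G × G) (c d : k) :
    lamMap k G z (dmul k G (Finsupp.single p c) (Finsupp.single q d))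
      = dmul k G (lamMap k G z (Finsupp.single p c)) (lamMap k G z (Finsupp.single q d)) := by
  rw [dmul_single_single, apply_ite (lamMap k G z), lam_zero, lam_single, lam_single, lam_single]
  simp only [smul_add, smul_sub, Finsupp.smul_single, smul_eq_mul, mul_one, sub_eq_add_neg,
    ← Finsupp.single_neg]
  rw [dmul_add_left, dmul_add_left, dmul_add_left, dmul_add_right, dmul_add_right,
    dmul_add_right, dmul_add_right, dmul_add_right, dmul_add_right, dmul_add_right,
    dmul_add_right, dmul_add_right, dmul_add_right, dmul_add_right, dmul_add_right]
  simp only [dmul_single_single]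
  simp only [hconj z hzc hz2, hmulz z hzc, hswap z hz2, mul_left_inj, ← mul_assoc,
    key2 z hzc, key3 z hzc hz2, key4 z hz2]
  by_cases hC0 : q.1⁻¹ * p.2 * q.1 = q.2 <;> by_cases hC1 : q.1⁻¹ * p.2 * q.1 = q.2 * z
  · -- z = 1 case
    have hz1 : z = 1 := by
      have h := hC0.symm.trans hC1
      exact (mul_left_cancel (a := q.2) (by rw [mul_one, ← h])).symm
    subst hz1
    simp only [mul_one] at hC1 ⊢
    simp only [eq_true hC0, if_true, smA]
    match_scalars <;> (try field_simp) <;> (try ring) <;> norm_num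
  · simp only [eq_true hC0, eq_false hC1, if_true, if_false, add_zero, zero_add, smA]
    match_scalars <;> (try field_simp) <;> (try ring) <;> norm_num
  · simp only [eq_true hC1, eq_false hC0, if_true, if_false, add_zero, zero_add, smA]
    match_scalars <;> (try field_simp) <;> (try ring) <;> norm_num
  · simp only [eq_false hC0, eq_false hC1, if_true, if_false, add_zero, zero_add]


include hzc hz2 in
lemma lam_mul_left (p : G × G) (c : k) (b : (G × G) →₀ k) :
    lamMap k G z (dmul k G (Finsupp.single p c) b)
      = dmul k G (lamMap k G z (Finsupp.single p c)) (lamMap k G z b) := by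
  induction b using Finsupp.induction with
  | zero => simp only [dmul_zero_right, lam_zero]
  | single_add q d b _ _ ih =>
    rw [dmul_add_right, lam_add, lam_add, dmul_add_right, ih, lam_mul_single z hzc hz2]

include hzc hz2 in
lemma lam_mul (a b : (G × G) →₀ k) :
    lamMap k G z (dmul k G a b)
      = dmul k G (lamMap k G z a) (lamMap k G z b) := by
  induction a using Finsupp.induction with
  | zero => simp only [dmul_zero_left, lam_zero]
  | single_add p c a _ _ ih =>
    rw [dmul_add_left, lam_add, lam_add, dmul_add_left, ih, lam_mul_left z hzc hz2]

lemma lam_neg (a : (G × G) →₀ k) : lamMap k G z (-a) = - lamMap k G z a := by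
  have := lam_smul k G z (-1 : k) a
  simpa using this

lemma lam_sub (a b : (G × G) →₀ k) :
    lamMap k G z (a - b) = lamMap k G z a - lamMap k G z b := by
  rw [sub_eq_add_neg, lam_add, lam_neg, sub_eq_add_neg]

include hz2 in
lemma lam_lam_single (p : G × G) (c : k) :
    lamMap k G z (lamMap k G z (Finsupp.single p c)) = Finsupp.single p c := by
  rw [lam_single, lam_smul, lam_sub, lam_add, lam_add, lam_single, lam_single, lam_single,
    lam_single]
  simp only [key4 z hz2, mul_one]
  rw [show (Finsupp.single p c : (G × G) →₀ k) = c • Finsupp.single (p.1, p.2) (1 : k) by simp]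
  match_scalars <;> (try field_simp) <;> (try ring) <;> norm_num

include hz2 in
lemma lam_invol : Function.Involutive (lamMap k G z) := by
  intro a
  induction a using Finsupp.induction with
  | zero => rw [lam_zero, lam_zero]
  | single_add p c a _ _ ih => rw [lam_add, lam_add, ih, lam_lam_single z hz2]

include hzc hz2 in
lemma lam_grp [Fintype G] (g : G) :
    lamMap k G z (∑ h : G, Finsupp.single (g, h) (1 : k))
      = ∑ h : G, Finsupp.single (g, h) (1 : k) := by
  have hs : lamMap k G z (∑ h : G, Finsupp.single (g, h) (1 : k))
      = ∑ h : G, lamMap k G z (Finsupp.single (g, h) (1 : k)) :=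
    map_sum (AddMonoidHom.mk' (lamMap k G z) (lam_add k G z)) _ _
  rw [hs]
  simp only [lam_single, mul_one]
  rw [← Finset.smul_sum, Finset.sum_sub_distrib, Finset.sum_add_distrib, Finset.sum_add_distrib]
  rw [show ∑ h : G, Finsupp.single (g, h * z) (1 : k) = ∑ h : G, Finsupp.single (g, h) (1 : k)
      from Fintype.sum_equiv (Equiv.mulRight z) _ _ (fun h => rfl)]
  rw [show ∑ h : G, Finsupp.single (g * z, h * z) (1 : k)
        = ∑ h : G, Finsupp.single (g * z, h) (1 : k)
      from Fintype.sum_equiv (Equiv.mulRight z) _ _ (fun h => rfl)]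
  match_scalars <;> norm_num
end

theorem lam_isAlgebraIso (k G : Type) [Field k] [CharZero k] [Group G] [Fintype G]
    [DecidableEq G] (z : G) (hzc : ∀ a : G, z * a = a * z) (hz2 : z * z = 1) :
    (∀ a b : (G × G) →₀ k, lamMap k G z (a + b) = lamMap k G z a + lamMap k G z b) ∧
    (∀ (r : k) (a : (G × G) →₀ k), lamMap k G z (r • a) = r • lamMap k G z a) ∧
    (∀ a b : (G × G) →₀ k,
      lamMap k G z (dmul k G a b) = dmul k G (lamMap k G z a) (lamMap k G z b)) ∧
    Function.Bijective (lamMap k G z) ∧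
    (∀ g : G, lamMap k G z (grpElem k G g) = grpElem k G g) ∧
    (∀ h : G, lamMap k G z (delElem k G h)
      = (2 : k)⁻¹ • (Finsupp.single ((1 : G), h) (1 : k)
          + Finsupp.single (z, h) (1 : k))
        + (2 : k)⁻¹ • (Finsupp.single ((1 : G), h * z) (1 : k)
          - Finsupp.single (z, h * z) (1 : k))) := by
  refine ⟨lam_add k G z, lam_smul k G z, lam_mul z hzc hz2, (lam_invol z hz2).bijective,
    fun g => lam_grp z hzc hz2 g, fun h => ?_⟩
  rw [delElem, lam_single]
  simp only [one_mul, mul_one]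
  match_scalars <;> norm_num
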